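/- Let σ ∈ A(δ) be a reflector from Ω̄ to D. If E ⊆ D is closed, then τ_σ(E) is a closed subset of Ω̄; in particular τ_σ(E) is Lebesgue measurable in S². -/

import Mathlib

noncomputable section

open MeasureTheory Metric Set Filter Topology
attribute [local instance] Classical.propDecidable

/-- Real inner product on `ℝ³`. -/
noncomputable def rinner (x y : EuclideanSpace ℝ (Fin 3)) : ℝ := inner ℝ x y

/-- Euclidean 3-space. -/
abbrev E3 : Type := EuclideanSpace ℝ (Fin 3)

/-- The unit sphere `S²` in `ℝ³`. -/
def sphere2 : Set E3 := Metric.sphere (0 : E3) 1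

/-- Unit vector `m = P/OP` in the direction of `P`. -/
noncomputable def axisDir (P : E3) : E3 := ‖P‖⁻¹ • P

/-- Eccentricity `ε = √(1 + d²/OP²) − d/OP` of the ellipsoid `E_d(P)`. -/
noncomputable def ecc (P : E3) (d : ℝ) : ℝ :=
  Real.sqrt (1 + d ^ 2 / ‖P‖ ^ 2) - d / ‖P‖

/-- Polar radius `ρ_d(x) = d/(1 − ε x·m)` of the ellipsoid `E_d(P)`. -/
noncomputable def polarRadius (P : E3) (d : ℝ) (x : E3) : ℝ :=
  d / (1 - ecc P d * rinner x (axisDir P))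

/-- The constant `c_δ = √(1 + δ²) − δ`. -/
noncomputable def cconst (δ : ℝ) : ℝ := Real.sqrt (1 + δ ^ 2) - δ

/-- Outer unit normal `(x − εm)/|x − εm|` of the ellipsoid `E_d(P)` at the point `ρ_d(x)x`. -/
noncomputable def normalVec (P : E3) (d : ℝ) (x : E3) : E3 :=
  ‖x - ecc P d • axisDir P‖⁻¹ • (x - ecc P d • axisDir P)

/-- The ellipsoid `E_d(P)` supports the surface `{ρ(x)x : x ∈ closure Ω}` at `ρ(x₀)x₀`. -/
def IsSupportingAt (Ω : Set E3) (ρ : E3 → ℝ) (P : E3) (d : ℝ) (x₀ : E3) : Prop :=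
  P ≠ 0 ∧ 0 < d ∧ (∀ x ∈ closure Ω, ρ x ≤ polarRadius P d x) ∧
    ρ x₀ = polarRadius P d x₀

/-- `{ρ(x)x : x ∈ closure Ω}` is a reflector from `closure Ω` to the target `D`. -/
def IsReflector (Ω D : Set E3) (ρ : E3 → ℝ) : Prop :=
  (∀ x ∈ closure Ω, 0 < ρ x) ∧
  ∀ x₀ ∈ closure Ω, ∃ P ∈ D, ∃ d : ℝ, IsSupportingAt Ω ρ P d x₀

/-- Tracing set `τ_σ(E)`: directions reflected into `E`. -/
def tracing (Ω : Set E3) (ρ : E3 → ℝ) (E : Set E3) : Set E3 :=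
  {x | x ∈ closure Ω ∧ ∃ P ∈ E, ∃ d : ℝ, IsSupportingAt Ω ρ P d x}

/-- The class `A(δ)`: reflectors all of whose points admit a supporting ellipsoid with
`d ≥ δ M`. -/
def InClassA (Ω D : Set E3) (ρ : E3 → ℝ) (δ M : ℝ) : Prop :=
  IsReflector Ω D ρ ∧
  ∀ x₀ ∈ closure Ω, ∃ P ∈ D, ∃ d : ℝ, δ * M ≤ d ∧ IsSupportingAt Ω ρ P d x₀

/-- The boundary `∂Ω` of `Ω` relative to the sphere `S²`. -/
def sphFrontier (Ω : Set E3) : Set E3 := closure Ω ∩ closure (sphere2 \ Ω)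

/-- `D` is contained in a plane of `ℝ³`. -/
def InPlane (D : Set E3) : Prop :=
  ∃ v : E3, v ≠ 0 ∧ ∃ c : ℝ, ∀ P ∈ D, rinner P v = c

/-- The set `S` of directions traced to two distinct target points. -/
def ambigSet (Ω D : Set E3) (ρ : E3 → ℝ) : Set E3 :=
  {x | x ∈ closure Ω ∧ ∃ P₁ ∈ D, ∃ P₂ ∈ D, P₁ ≠ P₂ ∧
    x ∈ tracing Ω ρ {P₁} ∧ x ∈ tracing Ω ρ {P₂}}

/-- A canonical selection of the outer unit normal `ν(x)` of the reflector; at every point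
where the supporting ellipsoid is unique (a.e. point) this is the normal of the
supporting ellipsoid. -/
noncomputable def nuSel (Ω D : Set E3) (ρ : E3 → ℝ) (x : E3) : E3 :=
  if h : ∃ p : E3 × ℝ, p.1 ∈ D ∧ IsSupportingAt Ω ρ p.1 p.2 x then
    normalVec h.choose.1 h.choose.2 x
  else 0

/-- A canonical selection of the reflector map `𝒩_σ(x)`; at every point with a unique
supporting ellipsoid (a.e. point) this is the target point the ray `x` is reflected to. -/
noncomputable def reflMapSel (Ω D : Set E3) (ρ : E3 → ℝ) (x : E3) : E3 :=
  if h : ∃ p : E3 × ℝ, p.1 ∈ D ∧ IsSupportingAt Ω ρ p.1 p.2 x then h.choose.1 else 0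

/-- The reflector measure `μ(E) = ∫_{τ_σ(E)} f(x) (x·ν(x))/ρ(x)² dx`,
the irradiance received on `E ⊆ D`. -/
noncomputable def reflMeasure (Ω D : Set E3) (ρ f : E3 → ℝ) (E : Set E3) : ℝ :=
  ∫ x in tracing Ω ρ E, f x * rinner x (nuSel Ω D ρ x) / ρ x ^ 2 ∂μH[2]

lemma norm_axisDir {P : E3} (hP : P ≠ 0) : ‖axisDir P‖ = 1 := by
  rw [axisDir, norm_smul, norm_inv, norm_norm, inv_mul_cancel₀ (norm_ne_zero_iff.2 hP)]

lemma abs_rinner_le {x P : E3} (hx : ‖x‖ = 1) (hP : P ≠ 0) :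
    |rinner x (axisDir P)| ≤ 1 := by
  have h := abs_real_inner_le_norm x (axisDir P)
  rw [hx, norm_axisDir hP, one_mul] at h
  simpa [rinner] using h

lemma ecc_eq {P : E3} (d : ℝ) :
    ecc P d = Real.sqrt (1 + (d/‖P‖)^2) - d/‖P‖ := by
  rw [ecc, div_pow]

lemma ecc_pos {P : E3} (hP : P ≠ 0) {d : ℝ} (hd : 0 < d) : 0 < ecc P d := by
  have hPn : 0 < ‖P‖ := norm_pos_iff.2 hP
  have ht0 : 0 < d / ‖P‖ := div_pos hd hPn
  rw [ecc_eq, sub_pos]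
  exact (Real.lt_sqrt ht0.le).2 (by nlinarith)

lemma ecc_lt_one {P : E3} (hP : P ≠ 0) {d : ℝ} (hd : 0 < d) : ecc P d < 1 := by
  have hPn : 0 < ‖P‖ := norm_pos_iff.2 hP
  have ht0 : 0 < d / ‖P‖ := div_pos hd hPn
  rw [ecc_eq, sub_lt_iff_lt_add]
  have h1 : Real.sqrt (1 + (d/‖P‖)^2) < 1 + d/‖P‖ := by
    apply (Real.sqrt_lt' (by linarith)).2
    nlinarith
  linarith

lemma one_sub_ecc_le {P : E3} (hP : P ≠ 0) {d : ℝ} (hd : 0 < d) :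
    1 - ecc P d ≤ d / ‖P‖ := by
  rw [ecc_eq]
  have h1 : (1:ℝ) ≤ Real.sqrt (1 + (d/‖P‖)^2) := by
    nlinarith [Real.sq_sqrt (show (0:ℝ) ≤ 1 + (d/‖P‖)^2 by positivity),
      Real.sqrt_nonneg (1 + (d/‖P‖)^2)]
  linarith

lemma denom_ge {x P : E3} (hx : ‖x‖ = 1) (hP : P ≠ 0) {d : ℝ} (hd : 0 < d) :
    1 - ecc P d ≤ 1 - ecc P d * rinner x (axisDir P) := by
  have h1 : rinner x (axisDir P) ≤ 1 := le_of_abs_le (abs_rinner_le hx hP)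
  nlinarith [ecc_pos hP hd]

lemma denom_pos {x P : E3} (hx : ‖x‖ = 1) (hP : P ≠ 0) {d : ℝ} (hd : 0 < d) :
    0 < 1 - ecc P d * rinner x (axisDir P) :=
  lt_of_lt_of_le (by linarith [ecc_lt_one hP hd]) (denom_ge hx hP hd)

lemma denom_le_two {x P : E3} (hx : ‖x‖ = 1) (hP : P ≠ 0) {d : ℝ} (hd : 0 < d) :
    1 - ecc P d * rinner x (axisDir P) ≤ 2 := by
  have h1 := abs_le.1 (abs_rinner_le hx hP)
  nlinarith [ecc_pos hP hd, ecc_lt_one hP hd]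

lemma polarRadius_le {x P : E3} (hx : ‖x‖ = 1) (hP : P ≠ 0) {d : ℝ} (hd : 0 < d) :
    polarRadius P d x ≤ d / (1 - ecc P d) := by
  rw [polarRadius]
  exact div_le_div_of_nonneg_left hd.le (by linarith [ecc_lt_one hP hd]) (denom_ge hx hP hd)

lemma tendsto_polarRadius {P : ℕ → E3} {d : ℕ → ℝ} {x : ℕ → E3} {Q x₀ : E3} {d₀ : ℝ}
    (hQ : Q ≠ 0) (hP : Tendsto P atTop (𝓝 Q)) (hd : Tendsto d atTop (𝓝 d₀))
    (hx : Tendsto x atTop (𝓝 x₀))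
    (hden : 1 - ecc Q d₀ * rinner x₀ (axisDir Q) ≠ 0) :
    Tendsto (fun n => polarRadius (P n) (d n) (x n)) atTop
      (𝓝 (polarRadius Q d₀ x₀)) := by
  have hQn : ‖Q‖ ≠ 0 := norm_ne_zero_iff.2 hQ
  have hnorm : Tendsto (fun n => ‖P n‖) atTop (𝓝 ‖Q‖) := (continuous_norm.tendsto Q).comp hP
  have hfrac : Tendsto (fun n => d n ^ 2 / ‖P n‖ ^ 2) atTop (𝓝 (d₀^2/‖Q‖^2)) :=
    (hd.pow 2).div (hnorm.pow 2) (pow_ne_zero 2 hQn)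
  have hsqrt : Tendsto (fun n => Real.sqrt (1 + d n ^ 2 / ‖P n‖ ^ 2)) atTop
      (𝓝 (Real.sqrt (1 + d₀ ^ 2 / ‖Q‖ ^ 2))) :=
    (Real.continuous_sqrt.tendsto _).comp (tendsto_const_nhds.add hfrac)
  have hecc : Tendsto (fun n => ecc (P n) (d n)) atTop (𝓝 (ecc Q d₀)) := by
    simpa [ecc] using hsqrt.sub (hd.div hnorm hQn)
  have haxis : Tendsto (fun n => axisDir (P n)) atTop (𝓝 (axisDir Q)) := by
    simpa [axisDir] using (hnorm.inv₀ hQn).smul hP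
  have hinner : Tendsto (fun n => rinner (x n) (axisDir (P n))) atTop
      (𝓝 (rinner x₀ (axisDir Q))) := by
    simpa [rinner] using hx.inner haxis
  have hdenom : Tendsto (fun n => 1 - ecc (P n) (d n) * rinner (x n) (axisDir (P n)))
      atTop (𝓝 (1 - ecc Q d₀ * rinner x₀ (axisDir Q))) :=
    tendsto_const_nhds.sub (hecc.mul hinner)
  exact hd.div hdenom hden


/-- For a reflector `σ ∈ A(δ)`, the tracing set of a closed subset
`E ⊆ D` is closed; in particular it is Lebesgue measurable for the surface measure. -/
theorem tracing_isClosed_of_closed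
    (Ω : Set E3) (hΩ : Ω ⊆ sphere2) (hfr : μH[2] (sphFrontier Ω) = 0)
    (D : Set E3) (hD : IsCompact D) (hO : (0 : E3) ∉ D)
    (M : ℝ) (hM : IsGreatest ((fun p : E3 => ‖p‖) '' D) M)
    (δ : ℝ) (hδ : 0 < δ)
    (ρ : E3 → ℝ) (hσ : InClassA Ω D ρ δ M)
    (E : Set E3) (hE : E ⊆ D) (hEcl : IsClosed E) :
    IsClosed (tracing Ω ρ E) ∧ NullMeasurableSet (tracing Ω ρ E) μH[2] := by
  have hclosΩ : closure Ω ⊆ sphere2 := closure_minimal hΩ Metric.isClosed_sphere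
  have hnorm1 : ∀ x ∈ closure Ω, ‖x‖ = 1 := by
    intro x hx
    simpa [sphere2, mem_sphere_iff_norm] using hclosΩ hx
  have hρpos := hσ.1.1
  have hclosed : IsClosed (tracing Ω ρ E) := by
    apply IsSeqClosed.isClosed
    intro u x₀ hu hux
    have huΩ : ∀ n, u n ∈ closure Ω := fun n => (hu n).1
    have hx₀Ω : x₀ ∈ closure Ω :=
      isClosed_closure.mem_of_tendsto hux (Filter.Eventually.of_forall huΩ)
    -- supporting ellipsoid at x₀ from the reflector property
    obtain ⟨P', hP'D, d', hP'ne, hd', hsup', heq'⟩ := hσ.1.2 x₀ hx₀Ω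
    -- supporting ellipsoids with foci in E at the points u n
    choose P hPE d hs using fun n => (hu n).2
    have hPne : ∀ n, P n ≠ 0 := fun n => (hs n).1
    have hdpos : ∀ n, 0 < d n := fun n => (hs n).2.1
    have hsup : ∀ n, ∀ x ∈ closure Ω, ρ x ≤ polarRadius (P n) (d n) x :=
      fun n => (hs n).2.2.1
    have heq : ∀ n, ρ (u n) = polarRadius (P n) (d n) (u n) := fun n => (hs n).2.2.2
    -- uniform bound on ρ and hence on d n
    set C : ℝ := d' / (1 - ecc P' d') with hC
    have hCpos : 0 < C := div_pos hd' (by linarith [ecc_lt_one hP'ne hd'])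
    have hρle : ∀ x ∈ closure Ω, ρ x ≤ C :=
      fun x hx => le_trans (hsup' x hx) (polarRadius_le (hnorm1 x hx) hP'ne hd')
    have hdIcc : ∀ n, d n ∈ Icc (0:ℝ) (2 * C) := by
      intro n
      refine ⟨(hdpos n).le, ?_⟩
      have hden := denom_pos (hnorm1 _ (huΩ n)) (hPne n) (hdpos n)
      have h2 := denom_le_two (hnorm1 _ (huΩ n)) (hPne n) (hdpos n)
      have hmul : d n = ρ (u n) * (1 - ecc (P n) (d n) * rinner (u n) (axisDir (P n))) := by
        have := heq n
        rw [polarRadius] at this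
        field_simp at this ⊢
        linarith [this]
      rw [hmul]
      have h0 : 0 < ρ (u n) := hρpos _ (huΩ n)
      calc ρ (u n) * (1 - ecc (P n) (d n) * rinner (u n) (axisDir (P n)))
          ≤ C * 2 := mul_le_mul (hρle _ (huΩ n)) h2 hden.le hCpos.le
        _ = 2 * C := by ring
    -- extract convergent subsequences
    have hKE : IsCompact E := hD.of_isClosed_subset hEcl hE
    obtain ⟨Q, hQE, φ, hφ, hPQ⟩ := hKE.tendsto_subseq hPE
    obtain ⟨d₀, hd₀mem, ψ, hψ, hdconv⟩ :=
      (isCompact_Icc (a := (0:ℝ)) (b := 2 * C)).tendsto_subseq (fun n => hdIcc (φ n))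
    set θ : ℕ → ℕ := φ ∘ ψ with hθ
    have hθmono : StrictMono θ := hφ.comp hψ
    have hPQ' : Tendsto (fun n => P (θ n)) atTop (𝓝 Q) := hPQ.comp hψ.tendsto_atTop
    have hdθ : Tendsto (fun n => d (θ n)) atTop (𝓝 d₀) := hdconv
    have hu' : Tendsto (fun n => u (θ n)) atTop (𝓝 x₀) := hux.comp hθmono.tendsto_atTop
    have hQ0 : Q ≠ 0 := fun h => hO (h ▸ hE hQE)
    rcases eq_or_lt_of_le hd₀mem.1 with hd₀ | hd₀
    · -- degenerate case: d₀ = 0; then closure Ω is a single point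
      have key : ∀ x ∈ closure Ω, Tendsto (fun n => axisDir (P (θ n))) atTop (𝓝 x) := by
        intro x hx
        have hx1 : ‖x‖ = 1 := hnorm1 x hx
        have hρx : 0 < ρ x := hρpos x hx
        have hQn : ‖Q‖ ≠ 0 := norm_ne_zero_iff.2 hQ0
        have hnormP : Tendsto (fun n => ‖P (θ n)‖) atTop (𝓝 ‖Q‖) :=
          (continuous_norm.tendsto Q).comp hPQ'
        have hbound : ∀ n, ‖axisDir (P (θ n)) - x‖ ^ 2
            ≤ 2 * (d (θ n) / ρ x) + 2 * (d (θ n) / ‖P (θ n)‖) := by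
          intro n
          set m := axisDir (P (θ n))
          have hm1 : ‖m‖ = 1 := norm_axisDir (hPne (θ n))
          have habs := abs_le.1 (abs_rinner_le hx1 (hPne (θ n)))
          have hden := denom_pos hx1 (hPne (θ n)) (hdpos (θ n))
          have he0 := ecc_pos (hPne (θ n)) (hdpos (θ n))
          have he1 := ecc_lt_one (hPne (θ n)) (hdpos (θ n))
          have hle := one_sub_ecc_le (hPne (θ n)) (hdpos (θ n))
          -- from the supporting inequality at x
          have h1 : ρ x ≤ d (θ n) / (1 - ecc (P (θ n)) (d (θ n)) * rinner x m) := by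
            simpa [polarRadius] using hsup (θ n) x hx
          have h2 : 1 - ecc (P (θ n)) (d (θ n)) * rinner x m ≤ d (θ n) / ρ x := by
            rw [le_div_iff₀ hρx]
            calc (1 - ecc (P (θ n)) (d (θ n)) * rinner x m) * ρ x
                ≤ (1 - ecc (P (θ n)) (d (θ n)) * rinner x m) *
                  (d (θ n) / (1 - ecc (P (θ n)) (d (θ n)) * rinner x m)) :=
                  mul_le_mul_of_nonneg_left h1 hden.le
              _ = d (θ n) := by
                have hne : (1 - ecc (P (θ n)) (d (θ n)) * rinner x m) ≠ 0 := hden.ne'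
                field_simp
          have hexp : ‖m - x‖ ^ 2 = 2 - 2 * rinner x m := by
            have h := @norm_sub_sq_real E3 _ _ m x
            rw [hm1, hx1] at h
            simp only [rinner]
            rw [h, ← real_inner_comm m x]
            ring
          rw [hexp]
          nlinarith [habs.1, habs.2]
        have hrhs : Tendsto (fun n => 2 * (d (θ n) / ρ x) + 2 * (d (θ n) / ‖P (θ n)‖))
            atTop (𝓝 0) := by
          have t1 : Tendsto (fun n => 2 * (d (θ n) / ρ x)) atTop (𝓝 (2 * (d₀ / ρ x))) := by
            exact (hdθ.div_const (ρ x)).const_mul 2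
          have t2 : Tendsto (fun n => 2 * (d (θ n) / ‖P (θ n)‖)) atTop
              (𝓝 (2 * (d₀ / ‖Q‖))) := by
            exact (hdθ.div hnormP hQn).const_mul 2
          have hrhs' := t1.add t2
          rw [← hd₀] at hrhs'
          simpa using hrhs'
        have hsq : Tendsto (fun n => ‖axisDir (P (θ n)) - x‖ ^ 2) atTop (𝓝 0) :=
          squeeze_zero (fun n => sq_nonneg _) hbound hrhs
        have hnrm : Tendsto (fun n => ‖axisDir (P (θ n)) - x‖) atTop (𝓝 0) := by
          have := (Real.continuous_sqrt.tendsto 0).comp hsq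
          simp only [Function.comp_def, Real.sqrt_zero] at this
          convert this using 2 with n
          rw [Real.sqrt_sq (norm_nonneg _)]
        rw [tendsto_iff_norm_sub_tendsto_zero]
        exact hnrm
      have huθ0 : u (θ 0) = x₀ :=
        tendsto_nhds_unique (key (u (θ 0)) (huΩ (θ 0))) (key x₀ hx₀Ω)
      rw [← huθ0]
      exact hu (θ 0)
    · -- main case: d₀ > 0
      have hden₀ : ∀ x, ‖x‖ = 1 → 0 < 1 - ecc Q d₀ * rinner x (axisDir Q) :=
        fun x hx => denom_pos hx hQ0 hd₀
      have claim1 : ∀ x ∈ closure Ω, ρ x ≤ polarRadius Q d₀ x := by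
        intro x hx
        refine ge_of_tendsto
          (tendsto_polarRadius hQ0 hPQ' hdθ tendsto_const_nhds (hden₀ x (hnorm1 x hx)).ne')
          (Filter.Eventually.of_forall fun n => hsup (θ n) x hx)
      have claim3 : polarRadius Q d₀ x₀ ≤ ρ x₀ := by
        have t1 : Tendsto (fun n => polarRadius (P (θ n)) (d (θ n)) (u (θ n))) atTop
            (𝓝 (polarRadius Q d₀ x₀)) :=
          tendsto_polarRadius hQ0 hPQ' hdθ hu' (hden₀ x₀ (hnorm1 x₀ hx₀Ω)).ne'
        have t2 : Tendsto (fun n => polarRadius P' d' (u (θ n))) atTop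
            (𝓝 (polarRadius P' d' x₀)) :=
          tendsto_polarRadius hP'ne tendsto_const_nhds tendsto_const_nhds hu'
            (denom_pos (hnorm1 x₀ hx₀Ω) hP'ne hd').ne'
        have hle : ∀ n, polarRadius (P (θ n)) (d (θ n)) (u (θ n))
            ≤ polarRadius P' d' (u (θ n)) := by
          intro n
          rw [← heq (θ n)]
          exact hsup' (u (θ n)) (huΩ (θ n))
        have := le_of_tendsto_of_tendsto' t1 t2 hle
        rwa [← heq'] at this
      exact ⟨hx₀Ω, Q, hQE, d₀, hQ0, hd₀, claim1,
        le_antisymm (claim1 x₀ hx₀Ω) claim3⟩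
  exact ⟨hclosed, hclosed.measurableSet.nullMeasurableSet⟩
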